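/- Let f : ℝ → ℝ be five times continuously differentiable on a neighborhood of x_i on a uniform grid of spacing h, and let f̂_{i+1/2} = (1/30)f(x_{i-2}) - (13/60)f(x_{i-1}) + (47/60)f(x_i) + (9/20)f(x_{i+1}) - (1/20)f(x_{i+2}). Then there is a function F with F(x_{i+1/2}) = f̂_{i+1/2} + O(h^5) such that (f̂_{i+1/2} - f̂_{i-1/2})/h = f'(x_i) + O(h^5) as h → 0. -/

import Mathlib

open Set

private lemma itd_within_eq {f : ℝ → ℝ} {m : ℕ} (hf : ContDiff ℝ (m : WithTop ℕ∞) f)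
    {s : Set ℝ} (hs : UniqueDiffOn ℝ s) :
    ∀ n ≤ m, ∀ x ∈ s, iteratedDerivWithin n f s x = iteratedDeriv n f x := by
  intro n
  induction n with
  | zero => intro _ x _; simp
  | succ n ih =>
    intro hn x hx
    have h1 : (n : WithTop ℕ∞) < (m : WithTop ℕ∞) := by exact_mod_cast hn
    have hdiff : DifferentiableAt ℝ (iteratedDeriv n f) x :=
      (hf.differentiable_iteratedDeriv n h1).differentiableAt
    rw [iteratedDerivWithin_succ,
      derivWithin_congr (fun y hy => ih (Nat.le_of_succ_le hn) y hy)
        (ih (Nat.le_of_succ_le hn) x hx),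
      hdiff.derivWithin (hs.uniqueDiffWithinAt hx), ← iteratedDeriv_succ]

private lemma itd_affine {f : ℝ → ℝ} (n : ℕ) (hf : ContDiff ℝ (n : WithTop ℕ∞) f)
    (xi k t : ℝ) :
    iteratedDeriv n (fun h : ℝ => f (xi + k * h)) t = k ^ n * iteratedDeriv n f (xi + k * t) := by
  have hF : ContDiff ℝ (n : WithTop ℕ∞) (fun y : ℝ => f (xi + y)) :=
    hf.comp (contDiff_const.add contDiff_id)
  have e1 : (fun h : ℝ => f (xi + k * h)) = (fun x : ℝ => (fun y : ℝ => f (xi + y)) (k * x)) := rfl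
  rw [e1, iteratedDeriv_comp_const_mul hF k]
  simp [iteratedDeriv_comp_const_add]

private lemma itd_add (n : ℕ) {f g : ℝ → ℝ} (hf : ContDiff ℝ (n : WithTop ℕ∞) f)
    (hg : ContDiff ℝ (n : WithTop ℕ∞) g) (x : ℝ) :
    iteratedDeriv n (fun y => f y + g y) x = iteratedDeriv n f x + iteratedDeriv n g x := by
  simp only [← iteratedDerivWithin_univ]
  exact iteratedDerivWithin_add (mem_univ x) uniqueDiffOn_univ hf.contDiffAt.contDiffWithinAt hg.contDiffAt.contDiffWithinAt

private lemma itd_cmul (n : ℕ) (c : ℝ) {f : ℝ → ℝ} (hf : ContDiff ℝ (n : WithTop ℕ∞) f) (x : ℝ) :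
    iteratedDeriv n (fun y => c * f y) x = c * iteratedDeriv n f x := by
  simp only [← iteratedDerivWithin_univ]
  exact iteratedDerivWithin_const_mul (mem_univ x) uniqueDiffOn_univ c hf.contDiffAt.contDiffWithinAt

private lemma itd_comb6 (n : ℕ) (c₁ c₂ c₃ c₄ c₅ c₆ : ℝ) {f₁ f₂ f₃ f₄ f₅ f₆ : ℝ → ℝ}
    (h₁ : ContDiff ℝ (n : WithTop ℕ∞) f₁) (h₂ : ContDiff ℝ (n : WithTop ℕ∞) f₂)
    (h₃ : ContDiff ℝ (n : WithTop ℕ∞) f₃) (h₄ : ContDiff ℝ (n : WithTop ℕ∞) f₄)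
    (h₅ : ContDiff ℝ (n : WithTop ℕ∞) f₅) (h₆ : ContDiff ℝ (n : WithTop ℕ∞) f₆) (x : ℝ) :
    iteratedDeriv n (fun y => c₁ * f₁ y + c₂ * f₂ y + c₃ * f₃ y + c₄ * f₄ y + c₅ * f₅ y
      + c₆ * f₆ y) x
    = c₁ * iteratedDeriv n f₁ x + c₂ * iteratedDeriv n f₂ x + c₃ * iteratedDeriv n f₃ x
      + c₄ * iteratedDeriv n f₄ x + c₅ * iteratedDeriv n f₅ x + c₆ * iteratedDeriv n f₆ x := by
  have g₁ : ContDiff ℝ (n : WithTop ℕ∞) (fun y => c₁ * f₁ y) := contDiff_const.mul h₁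
  have g₂ : ContDiff ℝ (n : WithTop ℕ∞) (fun y => c₂ * f₂ y) := contDiff_const.mul h₂
  have g₃ : ContDiff ℝ (n : WithTop ℕ∞) (fun y => c₃ * f₃ y) := contDiff_const.mul h₃
  have g₄ : ContDiff ℝ (n : WithTop ℕ∞) (fun y => c₄ * f₄ y) := contDiff_const.mul h₄
  have g₅ : ContDiff ℝ (n : WithTop ℕ∞) (fun y => c₅ * f₅ y) := contDiff_const.mul h₅
  have g₆ : ContDiff ℝ (n : WithTop ℕ∞) (fun y => c₆ * f₆ y) := contDiff_const.mul h₆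
  rw [itd_add n ((((g₁.add g₂).add g₃).add g₄).add g₅) g₆ x,
      itd_add n (((g₁.add g₂).add g₃).add g₄) g₅ x,
      itd_add n ((g₁.add g₂).add g₃) g₄ x,
      itd_add n (g₁.add g₂) g₃ x,
      itd_add n g₁ g₂ x,
      itd_cmul n c₁ h₁ x, itd_cmul n c₂ h₂ x, itd_cmul n c₃ h₃ x,
      itd_cmul n c₄ h₄ x, itd_cmul n c₅ h₅ x, itd_cmul n c₆ h₆ x]

/-- Fifth order accuracy of the conservative finite difference with the linear
fifth order flux: for f ∈ C⁶, (f̂_{i+1/2} − f̂_{i-1/2})/h − f'(x_i) = O(h⁵). -/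
theorem weno5_flux_difference_fifth_order (f : ℝ → ℝ) (hf : ContDiff ℝ 6 f) (xi : ℝ) :
    ∃ C > 0, ∃ δ > 0, ∀ h : ℝ, 0 < h → h < δ →
      |(((1 / 30) * f (xi - 2 * h) - (13 / 60) * f (xi - h) + (47 / 60) * f xi
            + (9 / 20) * f (xi + h) - (1 / 20) * f (xi + 2 * h))
         - ((1 / 30) * f (xi - 3 * h) - (13 / 60) * f (xi - 2 * h) + (47 / 60) * f (xi - h)
            + (9 / 20) * f xi - (1 / 20) * f (xi + h))) / h
        - deriv f xi| ≤ C * h ^ 5 := by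
  set A : ℝ → ℝ := fun h : ℝ =>
    (-(1/30)) * f (xi + (-3) * h) + (1/4) * f (xi + (-2) * h) + (-1) * f (xi + (-1) * h)
      + (1/3) * f (xi + 0 * h) + (1/2) * f (xi + 1 * h) + (-(1/20)) * f (xi + 2 * h) with hA
  have hA6 : ContDiff ℝ 6 A := by
    apply ContDiff.add ?_ (contDiff_const.mul (hf.comp (by fun_prop)))
    apply ContDiff.add ?_ (contDiff_const.mul (hf.comp (by fun_prop)))
    apply ContDiff.add ?_ (contDiff_const.mul (hf.comp (by fun_prop)))
    apply ContDiff.add ?_ (contDiff_const.mul (hf.comp (by fun_prop)))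
    exact ContDiff.add (contDiff_const.mul (hf.comp (by fun_prop)))
      (contDiff_const.mul (hf.comp (by fun_prop)))
  have hkey : ∀ n : ℕ, n ≤ 6 → ∀ t : ℝ, iteratedDeriv n A t
      = (-(1/30)) * ((-3:ℝ)^n * iteratedDeriv n f (xi + (-3) * t))
        + (1/4) * ((-2:ℝ)^n * iteratedDeriv n f (xi + (-2) * t))
        + (-1) * ((-1:ℝ)^n * iteratedDeriv n f (xi + (-1) * t))
        + (1/3) * ((0:ℝ)^n * iteratedDeriv n f (xi + 0 * t))
        + (1/2) * ((1:ℝ)^n * iteratedDeriv n f (xi + 1 * t))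
        + (-(1/20)) * ((2:ℝ)^n * iteratedDeriv n f (xi + 2 * t)) := by
    intro n hn t
    have hfn : ContDiff ℝ (n : WithTop ℕ∞) f := hf.of_le (by exact_mod_cast hn)
    have hT : ∀ k : ℝ, ContDiff ℝ (n : WithTop ℕ∞) (fun h : ℝ => f (xi + k * h)) :=
      fun k => hfn.comp (by fun_prop)
    rw [hA, itd_comb6 n _ _ _ _ _ _ (hT (-3)) (hT (-2)) (hT (-1)) (hT 0) (hT 1) (hT 2) t,
      itd_affine n hfn xi (-3) t, itd_affine n hfn xi (-2) t, itd_affine n hfn xi (-1) t,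
      itd_affine n hfn xi 0 t, itd_affine n hfn xi 1 t, itd_affine n hfn xi 2 t]
  -- bound on the sixth derivative on [0,1]
  have hcont : Continuous (iteratedDeriv 6 A) := hA6.continuous_iteratedDeriv 6 (le_refl _)
  obtain ⟨M, hM⟩ := isCompact_Icc.exists_bound_of_continuousOn
    (s := Icc (0:ℝ) 1) hcont.continuousOn
  have hM0 : 0 ≤ M := le_trans (norm_nonneg _) (hM 0 (by norm_num))
  have hud : UniqueDiffOn ℝ (Icc (0:ℝ) 1) := uniqueDiffOn_Icc one_pos
  have hMW : ∀ y ∈ Icc (0:ℝ) 1, ‖iteratedDerivWithin 6 A (Icc (0:ℝ) 1) y‖ ≤ M := by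
    intro y hy
    rw [itd_within_eq hA6 hud 6 le_rfl y hy]
    exact hM y hy
  have hAon : ContDiffOn ℝ ((5:ℕ) + 1) A (Icc (0:ℝ) 1) := by
    exact_mod_cast hA6.contDiffOn
  -- the Taylor polynomial of A of degree 5 at 0 is (deriv f xi) * h
  have hpoly : ∀ h : ℝ, taylorWithinEval A 5 (Icc (0:ℝ) 1) 0 h = deriv f xi * h := by
    intro h
    have h0 : (0:ℝ) ∈ Icc (0:ℝ) 1 := by norm_num
    rw [taylor_within_apply]
    have hw : ∀ n : ℕ, n ≤ 6 → iteratedDerivWithin n A (Icc (0:ℝ) 1) 0 = iteratedDeriv n A 0 :=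
      fun n hn => itd_within_eq hA6 hud n hn 0 h0
    rw [Finset.sum_range_succ, Finset.sum_range_succ, Finset.sum_range_succ,
      Finset.sum_range_succ, Finset.sum_range_succ, Finset.sum_range_succ,
      Finset.sum_range_zero,
      hw 0 (by norm_num), hw 1 (by norm_num), hw 2 (by norm_num), hw 3 (by norm_num),
      hw 4 (by norm_num), hw 5 (by norm_num),
      hkey 0 (by norm_num) 0, hkey 1 (by norm_num) 0, hkey 2 (by norm_num) 0,
      hkey 3 (by norm_num) 0, hkey 4 (by norm_num) 0, hkey 5 (by norm_num) 0]
    have hd : iteratedDeriv 1 f xi = deriv f xi := by rw [iteratedDeriv_one]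
    simp only [mul_zero, add_zero, zero_mul]
    rw [← hd]
    norm_num
    ring
  have hTay : ∀ h : ℝ, h ∈ Icc (0:ℝ) 1 → |A h - deriv f xi * h| ≤ M * h ^ 6 / 120 := by
    intro h hh
    have := taylor_mean_remainder_bound (by norm_num : (0:ℝ) ≤ 1) hAon hh hMW
    rw [hpoly h] at this
    simpa [Nat.factorial] using this
  refine ⟨M / 120 + 1, by positivity, 1, one_pos, fun h h0 h1 => ?_⟩
  have hh : h ∈ Icc (0:ℝ) 1 := ⟨le_of_lt h0, le_of_lt h1⟩
  have hAeq : ((1 / 30) * f (xi - 2 * h) - (13 / 60) * f (xi - h) + (47 / 60) * f xi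
            + (9 / 20) * f (xi + h) - (1 / 20) * f (xi + 2 * h))
         - ((1 / 30) * f (xi - 3 * h) - (13 / 60) * f (xi - 2 * h) + (47 / 60) * f (xi - h)
            + (9 / 20) * f xi - (1 / 20) * f (xi + h)) = A h := by
    simp only [hA]
    have e3 : xi + (-3) * h = xi - 3 * h := by ring
    have e2 : xi + (-2) * h = xi - 2 * h := by ring
    have e1 : xi + (-1) * h = xi - h := by ring
    have e0 : xi + 0 * h = xi := by ring
    have ep : xi + 1 * h = xi + h := by ring
    rw [e3, e2, e1, e0, ep]
    ring
  rw [hAeq]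
  have key : A h / h - deriv f xi = (A h - deriv f xi * h) / h := by
    field_simp
  rw [key, abs_div, abs_of_pos h0, div_le_iff₀ h0]
  calc |A h - deriv f xi * h| ≤ M * h ^ 6 / 120 := hTay h hh
    _ ≤ (M / 120 + 1) * h ^ 5 * h := by nlinarith [pow_pos h0 5, pow_pos h0 6, pow_nonneg h0.le 6, pow_nonneg h0.le 5]
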